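/- Traces (multiplicities) of the fundamental projections on trace-free symmetric two-tensors: the traces of the endomorphisms Π₁, Π₂, Π₃ of Sym²₀(ℝ^m) are tr Π₁ = (m+1)(m−2)/2, tr Π₂ = m − 1, tr Π₃ = 1. -/

import Mathlib

open Matrix

namespace NLT

/-- `|ξ|²`, the squared Euclidean norm of `ξ ∈ ℝ^m`. -/
noncomputable def nsq {m : ℕ} (ξ : Fin m → ℝ) : ℝ := ∑ i, ξ i ^ 2

/-- The space `Sym²₀(ℝ^m)` of trace-free symmetric two-tensors. -/
def sym20 (m : ℕ) : Submodule ℝ (Matrix (Fin m) (Fin m) ℝ) where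
  carrier := {φ | φ.IsSymm ∧ φ.trace = 0}
  add_mem' := fun ha hb => ⟨ha.1.add hb.1, by simp [Matrix.trace_add, ha.2, hb.2]⟩
  zero_mem' := ⟨Matrix.isSymm_zero, by simp⟩
  smul_mem' := fun c a ha => ⟨ha.1.smul c, by simp [Matrix.trace_smul, ha.2]⟩

theorem mem_sym20 {m : ℕ} {φ : Matrix (Fin m) (Fin m) ℝ} :
    φ ∈ sym20 m ↔ φ.IsSymm ∧ φ.trace = 0 := Iff.rfl

/-- `X₂` as a linear map: `(X₂φ)_{αβ} = (1/(2|ξ|²)) (ξ_α (φξ)_β + ξ_β (φξ)_α)`. -/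
noncomputable def X2L {m : ℕ} (ξ : Fin m → ℝ) :
    Matrix (Fin m) (Fin m) ℝ →ₗ[ℝ] Matrix (Fin m) (Fin m) ℝ where
  toFun φ := Matrix.of fun α β => (1 / (2 * nsq ξ)) * (ξ α * φ.mulVec ξ β + ξ β * φ.mulVec ξ α)
  map_add' a b := by
    ext α β
    simp [Matrix.add_mulVec, Matrix.add_apply]
    ring
  map_smul' c a := by
    ext α β
    simp [Matrix.smul_mulVec, Matrix.smul_apply, smul_eq_mul]
    ring

/-- `X₄` as a linear map: `(X₄φ)_{αβ} = (1/|ξ|²) δ_{αβ} ⟨ξ, φξ⟩`. -/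
noncomputable def X4L {m : ℕ} (ξ : Fin m → ℝ) :
    Matrix (Fin m) (Fin m) ℝ →ₗ[ℝ] Matrix (Fin m) (Fin m) ℝ where
  toFun φ := Matrix.of fun α β =>
    (1 / nsq ξ) * (if α = β then (1 : ℝ) else 0) * (ξ ⬝ᵥ φ.mulVec ξ)
  map_add' a b := by
    ext α β
    simp [Matrix.add_mulVec, Matrix.add_apply, dotProduct_add]
    split <;> ring
  map_smul' c a := by
    ext α β
    simp [Matrix.smul_mulVec, Matrix.smul_apply, smul_eq_mul, dotProduct_smul]
    split <;> ring

/-- `X₅` as a linear map: `(X₅φ)_{αβ} = (1/|ξ|⁴) ξ_α ξ_β ⟨ξ, φξ⟩`. -/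
noncomputable def X5L {m : ℕ} (ξ : Fin m → ℝ) :
    Matrix (Fin m) (Fin m) ℝ →ₗ[ℝ] Matrix (Fin m) (Fin m) ℝ where
  toFun φ := Matrix.of fun α β => (1 / (nsq ξ) ^ 2) * (ξ α * ξ β * (ξ ⬝ᵥ φ.mulVec ξ))
  map_add' a b := by
    ext α β
    simp [Matrix.add_mulVec, Matrix.add_apply, dotProduct_add]
    ring
  map_smul' c a := by
    ext α β
    simp [Matrix.smul_mulVec, Matrix.smul_apply, smul_eq_mul, dotProduct_smul]
    ring

/-- `Y₂ = X₂ − (1/m) X₄`. -/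
noncomputable def Y2L {m : ℕ} (ξ : Fin m → ℝ) :
    Matrix (Fin m) (Fin m) ℝ →ₗ[ℝ] Matrix (Fin m) (Fin m) ℝ :=
  X2L ξ - ((1 : ℝ) / m) • X4L ξ

/-- `Y₅ = X₅ − (1/m) X₄`. -/
noncomputable def Y5L {m : ℕ} (ξ : Fin m → ℝ) :
    Matrix (Fin m) (Fin m) ℝ →ₗ[ℝ] Matrix (Fin m) (Fin m) ℝ :=
  X5L ξ - ((1 : ℝ) / m) • X4L ξ

/-- `Π₁ = id − 2Y₂ + ((m−2)/(m−1)) Y₅`. -/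
noncomputable def Pi1L {m : ℕ} (ξ : Fin m → ℝ) :
    Matrix (Fin m) (Fin m) ℝ →ₗ[ℝ] Matrix (Fin m) (Fin m) ℝ :=
  LinearMap.id - (2 : ℝ) • Y2L ξ + (((m : ℝ) - 2) / ((m : ℝ) - 1)) • Y5L ξ

/-- `Π₂ = 2(Y₂ − Y₅)`. -/
noncomputable def Pi2L {m : ℕ} (ξ : Fin m → ℝ) :
    Matrix (Fin m) (Fin m) ℝ →ₗ[ℝ] Matrix (Fin m) (Fin m) ℝ :=
  (2 : ℝ) • (Y2L ξ - Y5L ξ)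

/-- `Π₃ = (m/(m−1)) Y₅`. -/
noncomputable def Pi3L {m : ℕ} (ξ : Fin m → ℝ) :
    Matrix (Fin m) (Fin m) ℝ →ₗ[ℝ] Matrix (Fin m) (Fin m) ℝ :=
  ((m : ℝ) / ((m : ℝ) - 1)) • Y5L ξ

theorem X2L_isSymm {m : ℕ} (ξ : Fin m → ℝ) (φ : Matrix (Fin m) (Fin m) ℝ) :
    (X2L ξ φ).IsSymm := by
  unfold Matrix.IsSymm
  ext α β
  simp only [Matrix.transpose_apply, X2L, LinearMap.coe_mk, AddHom.coe_mk, Matrix.of_apply]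
  ring

theorem X4L_isSymm {m : ℕ} (ξ : Fin m → ℝ) (φ : Matrix (Fin m) (Fin m) ℝ) :
    (X4L ξ φ).IsSymm := by
  unfold Matrix.IsSymm
  ext α β
  by_cases h : α = β <;> simp [X4L, Matrix.transpose_apply, h]
  intro h'
  exact absurd h'.symm h

theorem X5L_isSymm {m : ℕ} (ξ : Fin m → ℝ) (φ : Matrix (Fin m) (Fin m) ℝ) :
    (X5L ξ φ).IsSymm := by
  unfold Matrix.IsSymm
  ext α β
  simp only [Matrix.transpose_apply, X5L, LinearMap.coe_mk, AddHom.coe_mk, Matrix.of_apply]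
  ring

theorem X2L_trace {m : ℕ} (ξ : Fin m → ℝ) (φ : Matrix (Fin m) (Fin m) ℝ) :
    (X2L ξ φ).trace = (1 / nsq ξ) * (ξ ⬝ᵥ φ.mulVec ξ) := by
  simp [X2L, Matrix.trace, Matrix.diag, dotProduct, Finset.mul_sum]
  apply Finset.sum_congr rfl
  intros
  ring

theorem X4L_trace {m : ℕ} (ξ : Fin m → ℝ) (φ : Matrix (Fin m) (Fin m) ℝ) :
    (X4L ξ φ).trace = (m : ℝ) * ((1 / nsq ξ) * (ξ ⬝ᵥ φ.mulVec ξ)) := by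
  simp [X4L, Matrix.trace, Matrix.diag, Finset.sum_const, Finset.card_univ]

theorem X5L_trace {m : ℕ} (ξ : Fin m → ℝ) (φ : Matrix (Fin m) (Fin m) ℝ) :
    (X5L ξ φ).trace = (1 / nsq ξ) * (ξ ⬝ᵥ φ.mulVec ξ) := by
  have h : (X5L ξ φ).trace = (1 / (nsq ξ) ^ 2) * nsq ξ * (ξ ⬝ᵥ φ.mulVec ξ) := by
    simp only [X5L, LinearMap.coe_mk, AddHom.coe_mk, Matrix.trace, Matrix.diag_apply,
      Matrix.of_apply, nsq, Finset.sum_mul, Finset.mul_sum]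
    apply Finset.sum_congr rfl
    intros
    ring
  rw [h]
  rcases eq_or_ne (nsq ξ) 0 with h0 | h0
  · simp [h0]
  · field_simp

theorem Y2L_mem {m : ℕ} (hm : 2 ≤ m) (ξ : Fin m → ℝ) (φ : Matrix (Fin m) (Fin m) ℝ) :
    Y2L ξ φ ∈ sym20 m := by
  have hm' : (m : ℝ) ≠ 0 := Nat.cast_ne_zero.mpr (by omega)
  have happ : Y2L ξ φ = X2L ξ φ - ((1 : ℝ) / m) • X4L ξ φ := by
    simp [Y2L]
  rw [mem_sym20, happ]
  constructor
  · exact (X2L_isSymm ξ φ).sub ((X4L_isSymm ξ φ).smul _)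
  · rw [Matrix.trace_sub, Matrix.trace_smul, X2L_trace, X4L_trace, smul_eq_mul]
    field_simp
    simp

theorem Y5L_mem {m : ℕ} (hm : 2 ≤ m) (ξ : Fin m → ℝ) (φ : Matrix (Fin m) (Fin m) ℝ) :
    Y5L ξ φ ∈ sym20 m := by
  have hm' : (m : ℝ) ≠ 0 := Nat.cast_ne_zero.mpr (by omega)
  have happ : Y5L ξ φ = X5L ξ φ - ((1 : ℝ) / m) • X4L ξ φ := by
    simp [Y5L]
  rw [mem_sym20, happ]
  constructor
  · exact (X5L_isSymm ξ φ).sub ((X4L_isSymm ξ φ).smul _)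
  · rw [Matrix.trace_sub, Matrix.trace_smul, X5L_trace, X4L_trace, smul_eq_mul]
    field_simp
    simp

theorem Pi1L_mem {m : ℕ} (hm : 2 ≤ m) (ξ : Fin m → ℝ) :
    ∀ φ ∈ sym20 m, Pi1L ξ φ ∈ sym20 m := by
  intro φ hφ
  have happ : Pi1L ξ φ
      = φ - (2 : ℝ) • Y2L ξ φ + (((m : ℝ) - 2) / ((m : ℝ) - 1)) • Y5L ξ φ := by
    simp [Pi1L]
  rw [happ]
  exact add_mem (sub_mem hφ (Submodule.smul_mem _ _ (Y2L_mem hm ξ φ)))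
    (Submodule.smul_mem _ _ (Y5L_mem hm ξ φ))

theorem Pi2L_mem {m : ℕ} (hm : 2 ≤ m) (ξ : Fin m → ℝ) :
    ∀ φ ∈ sym20 m, Pi2L ξ φ ∈ sym20 m := by
  intro φ hφ
  have happ : Pi2L ξ φ = (2 : ℝ) • (Y2L ξ φ - Y5L ξ φ) := by
    simp [Pi2L]
  rw [happ]
  exact Submodule.smul_mem _ _ (sub_mem (Y2L_mem hm ξ φ) (Y5L_mem hm ξ φ))

theorem Pi3L_mem {m : ℕ} (hm : 2 ≤ m) (ξ : Fin m → ℝ) :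
    ∀ φ ∈ sym20 m, Pi3L ξ φ ∈ sym20 m := by
  intro φ hφ
  have happ : Pi3L ξ φ = ((m : ℝ) / ((m : ℝ) - 1)) • Y5L ξ φ := by
    simp [Pi3L]
  rw [happ]
  exact Submodule.smul_mem _ _ (Y5L_mem hm ξ φ)


section Aux

lemma trace_restrict_eq {V : Type*} [AddCommGroup V] [Module ℝ V] [FiniteDimensional ℝ V]
    (p : Submodule ℝ V) (f : V →ₗ[ℝ] V) (hf : ∀ x, f x ∈ p) (h : ∀ x ∈ p, f x ∈ p) :
    LinearMap.trace ℝ p (f.restrict h) = LinearMap.trace ℝ V f := by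
  have h1 : f.restrict h = (f.codRestrict p hf) ∘ₗ p.subtype := by
    ext x; rfl
  have h2 : f = p.subtype ∘ₗ (f.codRestrict p hf) := by
    ext x; rfl
  rw [h1, LinearMap.trace_comp_comm', ← h2]

lemma stdBasis_repr_eq {m : ℕ} (M : Matrix (Fin m) (Fin m) ℝ) (p : Fin m × Fin m) :
    (Matrix.stdBasis ℝ (Fin m) (Fin m)).repr M p = M p.1 p.2 := by
  have : M = ∑ q : Fin m × Fin m, M q.1 q.2 • Matrix.stdBasis ℝ (Fin m) (Fin m) q := by
    conv_lhs => rw [Matrix.matrix_eq_sum_single M]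
    rw [← Finset.sum_product']
    apply Finset.sum_congr rfl
    intro q _
    rw [Matrix.stdBasis_eq_single, Matrix.smul_single, smul_eq_mul, mul_one]
  conv_lhs => rw [this]
  rw [Module.Basis.repr_sum_self]

lemma trace_eq_sum' {m : ℕ} (f : Matrix (Fin m) (Fin m) ℝ →ₗ[ℝ] Matrix (Fin m) (Fin m) ℝ) :
    LinearMap.trace ℝ _ f
      = ∑ p : Fin m × Fin m, (f (Matrix.single p.1 p.2 1)) p.1 p.2 := by
  rw [LinearMap.trace_eq_matrix_trace ℝ (Matrix.stdBasis ℝ (Fin m) (Fin m)) f]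
  unfold Matrix.trace
  apply Finset.sum_congr rfl
  intro p _
  rw [Matrix.diag_apply, LinearMap.toMatrix_apply, Matrix.stdBasis_eq_single,
    stdBasis_repr_eq]

lemma nsq_ne_zero {m : ℕ} {ξ : Fin m → ℝ} (hξ : ξ ≠ 0) : nsq ξ ≠ 0 := by
  intro h
  apply hξ
  funext i
  have h2 := (Finset.sum_eq_zero_iff_of_nonneg (fun j _ => sq_nonneg (ξ j))).1 h i
    (Finset.mem_univ i)
  have := pow_eq_zero_iff (n := 2) (by norm_num) |>.1 h2
  simpa using this

/-- projector onto symmetric traceless part (full-space endomorphism) -/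
noncomputable def PL (m : ℕ) :
    Matrix (Fin m) (Fin m) ℝ →ₗ[ℝ] Matrix (Fin m) (Fin m) ℝ where
  toFun φ := Matrix.of fun α β =>
    (1 / 2) * (φ α β + φ β α) - (1 / (m : ℝ)) * (if α = β then (1 : ℝ) else 0) * φ.trace
  map_add' a b := by
    ext α β
    simp [Matrix.add_apply, Matrix.trace_add]
    split <;> ring
  map_smul' c a := by
    ext α β
    simp [Matrix.smul_apply, smul_eq_mul, Matrix.trace_smul]
    split <;> ring

lemma X2L_full_trace {m : ℕ} {ξ : Fin m → ℝ} (hξ : ξ ≠ 0) :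
    LinearMap.trace ℝ _ (X2L ξ) = ((m : ℝ) + 1) / 2 := by
  have hs := nsq_ne_zero hξ
  rw [trace_eq_sum']
  have : ∀ p : Fin m × Fin m, ((X2L ξ) (Matrix.single p.1 p.2 1)) p.1 p.2
      = (1 / (2 * nsq ξ)) * (ξ p.1 * (if p.2 = p.1 then ξ p.2 else 0) + ξ p.2 * ξ p.2) := by
    intro p
    simp [X2L, Matrix.single_mulVec, Function.update_apply]
  rw [Finset.sum_congr rfl fun p _ => this p]
  rw [Fintype.sum_prod_type]
  have e1 : ∀ i : Fin m, ∑ j : Fin m,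
      (1 / (2 * nsq ξ)) * (ξ i * (if j = i then ξ j else 0) + ξ j * ξ j)
      = (1 / (2 * nsq ξ)) * (ξ i * ξ i + nsq ξ) := by
    intro i
    rw [← Finset.mul_sum, Finset.sum_add_distrib]
    congr 2
    · simp [mul_ite, Finset.sum_ite_eq']
    · simp [nsq, sq]
  rw [Finset.sum_congr rfl fun i _ => e1 i, ← Finset.mul_sum, Finset.sum_add_distrib]
  have : (∑ i : Fin m, ξ i * ξ i) = nsq ξ := by simp [nsq, sq]
  rw [this, Finset.sum_const, Finset.card_univ, Fintype.card_fin, nsmul_eq_mul]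
  field_simp
  ring

lemma X4L_full_trace {m : ℕ} {ξ : Fin m → ℝ} (hξ : ξ ≠ 0) :
    LinearMap.trace ℝ _ (X4L ξ) = 1 := by
  have hs := nsq_ne_zero hξ
  rw [trace_eq_sum']
  have : ∀ p : Fin m × Fin m, ((X4L ξ) (Matrix.single p.1 p.2 1)) p.1 p.2
      = (1 / nsq ξ) * (if p.1 = p.2 then ξ p.1 * ξ p.2 else 0) := by
    intro p
    have hd : ξ ⬝ᵥ (Matrix.single p.1 p.2 1).mulVec ξ = ξ p.1 * ξ p.2 := by
      simp [Matrix.single_mulVec, dotProduct, Function.update_apply,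
        mul_ite, Finset.sum_ite_eq']
    simp only [X4L, LinearMap.coe_mk, AddHom.coe_mk, Matrix.of_apply, hd]
    split <;> ring
  rw [Finset.sum_congr rfl fun p _ => this p, ← Finset.mul_sum, Fintype.sum_prod_type]
  have : ∀ i : Fin m, (∑ j : Fin m, if i = j then ξ i * ξ j else 0) = ξ i * ξ i := by
    intro i; simp [Finset.sum_ite_eq]
  rw [Finset.sum_congr rfl fun i _ => this i]
  have : (∑ i : Fin m, ξ i * ξ i) = nsq ξ := by simp [nsq, sq]
  rw [this]
  field_simp

lemma X5L_full_trace {m : ℕ} {ξ : Fin m → ℝ} (hξ : ξ ≠ 0) :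
    LinearMap.trace ℝ _ (X5L ξ) = 1 := by
  have hs := nsq_ne_zero hξ
  rw [trace_eq_sum']
  have : ∀ p : Fin m × Fin m, ((X5L ξ) (Matrix.single p.1 p.2 1)) p.1 p.2
      = (1 / (nsq ξ) ^ 2) * (ξ p.1 * ξ p.1 * (ξ p.2 * ξ p.2)) := by
    intro p
    have hd : ξ ⬝ᵥ (Matrix.single p.1 p.2 1).mulVec ξ = ξ p.1 * ξ p.2 := by
      simp [Matrix.single_mulVec, dotProduct, Function.update_apply,
        mul_ite, Finset.sum_ite_eq']
    simp only [X5L, LinearMap.coe_mk, AddHom.coe_mk, Matrix.of_apply, hd]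
    ring
  rw [Finset.sum_congr rfl fun p _ => this p, ← Finset.mul_sum, Fintype.sum_prod_type]
  have e : ∀ i : Fin m, (∑ j : Fin m, ξ i * ξ i * (ξ j * ξ j)) = ξ i * ξ i * nsq ξ := by
    intro i; rw [← Finset.mul_sum]; congr 1; simp [nsq, sq]
  rw [Finset.sum_congr rfl fun i _ => e i, ← Finset.sum_mul]
  have : (∑ i : Fin m, ξ i * ξ i) = nsq ξ := by simp [nsq, sq]
  rw [this]
  field_simp

lemma PL_full_trace {m : ℕ} (hm : 2 ≤ m) :
    LinearMap.trace ℝ _ (PL m) = ((m : ℝ) ^ 2 + m) / 2 - 1 := by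
  have hm0 : (m : ℝ) ≠ 0 := Nat.cast_ne_zero.mpr (by omega)
  rw [trace_eq_sum']
  have : ∀ p : Fin m × Fin m, ((PL m) (Matrix.single p.1 p.2 1)) p.1 p.2
      = (1 / 2) * (1 + (if p.1 = p.2 then (1:ℝ) else 0))
        - (1 / (m : ℝ)) * (if p.1 = p.2 then (1:ℝ) else 0) := by
    intro p
    obtain ⟨i, j⟩ := p
    have ht : (Matrix.single i j (1:ℝ)).trace = if i = j then 1 else 0 := by
      by_cases h : i = j
      · subst h; simp [Matrix.trace_single_eq_same]
      · simp [Matrix.trace_single_eq_of_ne i j (1:ℝ) h, h]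
    by_cases h : i = j
    · subst h
      simp [PL, ht, Matrix.single_apply_same]
    · have h1 : Matrix.single i j (1:ℝ) i j = 1 :=
        Matrix.single_apply_same (i := i) (j := j) (c := 1)
      have h2 : Matrix.single i j (1:ℝ) j i = 0 :=
        Matrix.single_apply_of_ne (i := i) (j := j) (c := 1) (i' := j) (j' := i) (by tauto)
      simp [PL, ht, h1, h2, h]
  rw [Finset.sum_congr rfl fun p _ => this p, Fintype.sum_prod_type]
  have e : ∀ i : Fin m, ∑ j : Fin m,
      ((1/2) * (1 + if i = j then (1:ℝ) else 0) - (1 / (m:ℝ)) * if i = j then 1 else 0)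
      = (m : ℝ) / 2 + 1 / 2 - 1 / m := by
    intro i
    rw [Finset.sum_sub_distrib]
    simp [mul_add, Finset.sum_add_distrib, mul_ite, mul_one, mul_zero, Finset.sum_ite_eq,
      Finset.sum_const, Finset.card_univ, Fintype.card_fin]
    ring
  rw [Finset.sum_congr rfl fun i _ => e i, Finset.sum_const, Finset.card_univ,
    Fintype.card_fin, nsmul_eq_mul]
  field_simp

lemma PL_mem {m : ℕ} (hm : 2 ≤ m) (φ : Matrix (Fin m) (Fin m) ℝ) : PL m φ ∈ sym20 m := by
  have hm0 : (m : ℝ) ≠ 0 := Nat.cast_ne_zero.mpr (by omega)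
  rw [mem_sym20]
  constructor
  · unfold Matrix.IsSymm
    ext α β
    simp only [Matrix.transpose_apply, PL, LinearMap.coe_mk, AddHom.coe_mk, Matrix.of_apply]
    by_cases h : α = β
    · subst h; ring
    · simp [h, Ne.symm h]; ring
  · have : (PL m φ).trace
        = ∑ α : Fin m, ((1/2) * (φ α α + φ α α) - (1 / (m:ℝ)) * 1 * φ.trace) := by
      unfold Matrix.trace
      apply Finset.sum_congr rfl
      intro α _
      simp [Matrix.diag_apply, PL, Matrix.trace, Matrix.diag]
    rw [this, Finset.sum_sub_distrib]
    have h1 : ∑ α : Fin m, (1/2 : ℝ) * (φ α α + φ α α) = φ.trace := by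
      unfold Matrix.trace
      apply Finset.sum_congr rfl
      intro α _
      rw [Matrix.diag_apply]
      ring
    rw [h1, Finset.sum_const, Finset.card_univ, Fintype.card_fin, nsmul_eq_mul]
    field_simp
    simp

lemma PL_id {m : ℕ} (hm : 2 ≤ m) {φ : Matrix (Fin m) (Fin m) ℝ} (hφ : φ ∈ sym20 m) :
    PL m φ = φ := by
  rw [mem_sym20] at hφ
  obtain ⟨hs, ht⟩ := hφ
  ext α β
  have hsym : φ β α = φ α β := hs.apply β α |>.symm ▸ (Matrix.IsSymm.apply hs β α)
  simp [PL, hsym, ht]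
  ring

end Aux

/-- Traces (multiplicities) of the fundamental projections `Π₁, Π₂, Π₃`, regarded as
endomorphisms of the space `Sym²₀(ℝ^m)` of trace-free symmetric two-tensors:
`tr Π₁ = (m+1)(m−2)/2`, `tr Π₂ = m−1`, `tr Π₃ = 1`. -/
theorem Pi_traces (m : ℕ) (hm : 2 ≤ m) (ξ : Fin m → ℝ) (hξ : ξ ≠ 0) :
    LinearMap.trace ℝ (sym20 m) ((Pi1L ξ).restrict (Pi1L_mem hm ξ))
      = ((m : ℝ) + 1) * ((m : ℝ) - 2) / 2 ∧
    LinearMap.trace ℝ (sym20 m) ((Pi2L ξ).restrict (Pi2L_mem hm ξ)) = (m : ℝ) - 1 ∧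
    LinearMap.trace ℝ (sym20 m) ((Pi3L ξ).restrict (Pi3L_mem hm ξ)) = 1 := by
  have hm0 : (m : ℝ) ≠ 0 := Nat.cast_ne_zero.mpr (by omega)
  have hm2 : (2 : ℝ) ≤ (m : ℝ) := by exact_mod_cast hm
  have hm1 : (m : ℝ) - 1 ≠ 0 := by linarith
  have tY2 : LinearMap.trace ℝ _ (Y2L ξ) = ((m : ℝ) + 1) / 2 - 1 / m := by
    unfold Y2L
    rw [map_sub, _root_.map_smul, X2L_full_trace hξ, X4L_full_trace hξ, smul_eq_mul, mul_one]
  have tY5 : LinearMap.trace ℝ _ (Y5L ξ) = 1 - 1 / m := by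
    unfold Y5L
    rw [map_sub, _root_.map_smul, X5L_full_trace hξ, X4L_full_trace hξ, smul_eq_mul, mul_one]
  refine ⟨?_, ?_, ?_⟩
  · set c : ℝ := ((m : ℝ) - 2) / ((m : ℝ) - 1) with hc
    set Q1 : Matrix (Fin m) (Fin m) ℝ →ₗ[ℝ] Matrix (Fin m) (Fin m) ℝ :=
      PL m - (2 : ℝ) • Y2L ξ + c • Y5L ξ with hQ1
    have hfQ : ∀ x, Q1 x ∈ sym20 m := by
      intro x
      have : Q1 x = (PL m x - (2 : ℝ) • Y2L ξ x) + c • Y5L ξ x := by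
        simp [hQ1]
      rw [this]
      exact add_mem (sub_mem (PL_mem hm x) (Submodule.smul_mem _ _ (Y2L_mem hm ξ x)))
        (Submodule.smul_mem _ _ (Y5L_mem hm ξ x))
    have hrest : (Pi1L ξ).restrict (Pi1L_mem hm ξ) = Q1.restrict (fun x _ => hfQ x) := by
      ext x
      have : Pi1L ξ (x : Matrix (Fin m) (Fin m) ℝ) = Q1 (x : Matrix (Fin m) (Fin m) ℝ) := by
        simp only [Pi1L, hQ1, LinearMap.add_apply, LinearMap.sub_apply, LinearMap.smul_apply,
          LinearMap.id_apply]
        rw [PL_id hm x.2]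
      simp [LinearMap.restrict_apply, this]
    rw [hrest, trace_restrict_eq _ _ hfQ, hQ1, map_add, map_sub, _root_.map_smul, _root_.map_smul,
      PL_full_trace hm, tY2, tY5, smul_eq_mul, smul_eq_mul, hc]
    field_simp
    ring
  · have hf : ∀ x, Pi2L ξ x ∈ sym20 m := by
      intro x
      have : Pi2L ξ x = (2 : ℝ) • (Y2L ξ x - Y5L ξ x) := by simp [Pi2L]
      rw [this]
      exact Submodule.smul_mem _ _ (sub_mem (Y2L_mem hm ξ x) (Y5L_mem hm ξ x))
    rw [trace_restrict_eq _ _ hf, Pi2L, _root_.map_smul, map_sub, tY2, tY5, smul_eq_mul]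
    field_simp
    ring
  · have hf : ∀ x, Pi3L ξ x ∈ sym20 m := by
      intro x
      have : Pi3L ξ x = ((m : ℝ) / ((m : ℝ) - 1)) • Y5L ξ x := by simp [Pi3L]
      rw [this]
      exact Submodule.smul_mem _ _ (Y5L_mem hm ξ x)
    rw [trace_restrict_eq _ _ hf, Pi3L, _root_.map_smul, tY5, smul_eq_mul]
    field_simp


end NLT
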